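/- Let u ≥ 0 be a real number with 2u < 1, and set γ₂ := 2u/(1−2u). Let α, β, h, c₂_prev, c₁_prev, ĉ₂_prev, ĉ₁_prev, ĉ be real numbers, with errors e₂_prev := ĉ₂_prev − c₂_prev and e₁_prev := ĉ₁_prev − c₁_prev. Suppose the exact recursion c = c₂_prev − α·c₁_prev − h·β holds, and the computed value satisfies (1+ε)·ĉ = ĉ₂_prev·(1+δ) − α·ĉ₁_prev·(1+θ₂) − h·β·(1+η) for some real δ, η, ε, θ₂ with |δ| ≤ u, |η| ≤ u, |ε| ≤ u, |θ₂| ≤ γ₂. Then the error e := ĉ − c satisfies |e| ≤ |e₂_prev| + |α·e₁_prev| + u·(|ĉ₂_prev| + |h·β| + |ĉ|) + γ₂·|α·ĉ₁_prev|. -/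

import Mathlib

/-- Theorem 5.2 (inductive case) of the paper: error bound for
`ĉ₂⁽ⁱ⁾ = fl[fl[ĉ₂⁽ⁱ⁻¹⁾ − fl[αᵢ ĉ₁⁽ⁱ⁻¹⁾]] − fl[h_{i−1,i} βᵢ]]`, `i ≥ 3`. -/
theorem stmt_8 (u : ℝ) (hu : 0 ≤ u) (h2u : 2 * u < 1)
    (α β h c₂prev c₁prev c₂hatprev c₁hatprev chat c δ η ε θ₂ : ℝ)
    (hδ : |δ| ≤ u) (hη : |η| ≤ u) (hε : |ε| ≤ u)
    (hθ : |θ₂| ≤ 2 * u / (1 - 2 * u))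
    (hexact : c = c₂prev - α * c₁prev - h * β)
    (hcomp : (1 + ε) * chat =
      c₂hatprev * (1 + δ) - α * c₁hatprev * (1 + θ₂) - h * β * (1 + η)) :
    |chat - c| ≤ |c₂hatprev - c₂prev| + |α * (c₁hatprev - c₁prev)|
      + u * (|c₂hatprev| + |h * β| + |chat|)
      + (2 * u / (1 - 2 * u)) * |α * c₁hatprev| := by
  have key : chat - c = (c₂hatprev - c₂prev) - α * (c₁hatprev - c₁prev)
      + δ * c₂hatprev - η * (h * β) - ε * chat - θ₂ * (α * c₁hatprev) := by
    nlinarith [hcomp, hexact]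
  rw [key]
  have b1 : |δ * c₂hatprev| ≤ u * |c₂hatprev| := by
    rw [abs_mul]; exact mul_le_mul_of_nonneg_right hδ (abs_nonneg _)
  have b2 : |η * (h * β)| ≤ u * |h * β| := by
    rw [abs_mul]; exact mul_le_mul_of_nonneg_right hη (abs_nonneg _)
  have b3 : |ε * chat| ≤ u * |chat| := by
    rw [abs_mul]; exact mul_le_mul_of_nonneg_right hε (abs_nonneg _)
  have b4 : |θ₂ * (α * c₁hatprev)| ≤ (2 * u / (1 - 2 * u)) * |α * c₁hatprev| := by
    rw [abs_mul]; exact mul_le_mul_of_nonneg_right hθ (abs_nonneg _)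
  calc |(c₂hatprev - c₂prev) - α * (c₁hatprev - c₁prev)
      + δ * c₂hatprev - η * (h * β) - ε * chat - θ₂ * (α * c₁hatprev)|
      ≤ |c₂hatprev - c₂prev| + |α * (c₁hatprev - c₁prev)| + |δ * c₂hatprev|
        + |η * (h * β)| + |ε * chat| + |θ₂ * (α * c₁hatprev)| := by
        calc _ ≤ |(c₂hatprev - c₂prev) - α * (c₁hatprev - c₁prev)
              + δ * c₂hatprev - η * (h * β) - ε * chat| + |θ₂ * (α * c₁hatprev)| :=
              abs_sub _ _
          _ ≤ |(c₂hatprev - c₂prev) - α * (c₁hatprev - c₁prev)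
              + δ * c₂hatprev - η * (h * β)| + |ε * chat| + |θ₂ * (α * c₁hatprev)| := by
              gcongr; exact abs_sub _ _
          _ ≤ |(c₂hatprev - c₂prev) - α * (c₁hatprev - c₁prev)
              + δ * c₂hatprev| + |η * (h * β)| + |ε * chat| + |θ₂ * (α * c₁hatprev)| := by
              gcongr; exact abs_sub _ _
          _ ≤ |(c₂hatprev - c₂prev) - α * (c₁hatprev - c₁prev)|
              + |δ * c₂hatprev| + |η * (h * β)| + |ε * chat| + |θ₂ * (α * c₁hatprev)| := by
              gcongr; exact abs_add_le _ _
          _ ≤ _ := by gcongr; exact abs_sub _ _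
    _ ≤ _ := by
        have : |α * (c₁hatprev - c₁prev)| = |α * (c₁hatprev - c₁prev)| := rfl
        nlinarith [b1, b2, b3, b4]
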